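/- Let N and M be compact metric spaces, F : N → N and f : M → M continuous, and π : N → M a continuous surjection with π∘F = f∘π. Suppose F uniformly contracts fibers: there is 0 < λ < 1 such that d_N(F(ŷ), F(ẑ)) ≤ λ d_N(ŷ, ẑ) whenever π(ŷ) = π(ẑ). If μ̂₁ and μ̂₂ are ergodic F-invariant Borel probability measures on N with π_*μ̂₁ = π_*μ̂₂ and this common projection is an ergodic f-invariant measure, then μ̂₁ = μ̂₂. -/

import Mathlib

open MeasureTheory Set Filter Topology
open scoped ENNReal NNReal

noncomputable section

namespace PaperWG

variable {X : Type*}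

section Dyn

variable [MetricSpace X]

/-- The dynamical ball `B_ε(x,n) = {y : d(T^j x, T^j y) < ε for all 0 ≤ j ≤ n}`. -/
def dynBall (T : X → X) (x : X) (n : ℕ) (ε : ℝ) : Set X :=
  {y | ∀ j ≤ n, dist (T^[j] x) (T^[j] y) < ε}

/-- Birkhoff sum `S_n φ(x) = ∑_{j=0}^{n-1} φ(T^j x)`. -/
def birkhoff (T : X → X) (φ : X → ℝ) (n : ℕ) (x : X) : ℝ :=
  ∑ j ∈ Finset.range n, φ (T^[j] x)

/-- `R_{n,ε}φ(x) = sup_{y ∈ B_ε(x,n)} S_n φ(y)`. -/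
def rSup (T : X → X) (φ : X → ℝ) (n : ℕ) (ε : ℝ) (x : X) : ℝ :=
  sSup (birkhoff T φ n '' dynBall T x n ε)

/-- `m_T(φ,Λ,ε,N,γ)`: infimum over countable covers of `Λ` by dynamical balls with
time at least `N` of `∑ exp(-γ n + R_{n,ε}φ(x))`. -/
def mPre (T : X → X) (φ : X → ℝ) (Λ : Set X) (ε : ℝ) (N : ℕ) (γ : ℝ) : ℝ≥0∞ :=
  ⨅ (U : Set (X × ℕ)) (_ : U.Countable) (_ : ∀ p ∈ U, N ≤ p.2)
    (_ : Λ ⊆ ⋃ p ∈ U, dynBall T p.1 p.2 ε),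
    ∑' p : U, ENNReal.ofReal (Real.exp (-γ * (p.1.2 : ℝ) + rSup T φ p.1.2 ε p.1.1))

/-- `m_T(φ,Λ,ε,γ) = lim_{N→∞} m_T(φ,Λ,ε,N,γ)`; the quantity is nondecreasing in `N`,
so the limit is the supremum. -/
def mRel (T : X → X) (φ : X → ℝ) (Λ : Set X) (ε γ : ℝ) : ℝ≥0∞ :=
  ⨆ N : ℕ, mPre T φ Λ ε N γ

/-- `P_T(φ,Λ,ε) = inf {γ : m_T(φ,Λ,ε,γ) = 0}`. -/
def presRelEps (T : X → X) (φ : X → ℝ) (Λ : Set X) (ε : ℝ) : ℝ :=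
  sInf {γ : ℝ | mRel T φ Λ ε γ = 0}

/-- The relative topological pressure `P_T(φ,Λ) = lim_{ε→0} P_T(φ,Λ,ε)`; the quantity is
nonincreasing in `ε`, so the limit is the supremum over `ε > 0`. -/
def presRel (T : X → X) (φ : X → ℝ) (Λ : Set X) : ℝ :=
  ⨆ ε : {e : ℝ // 0 < e}, presRelEps T φ Λ ε.1

/-- The topological pressure `P_T(φ) = P_T(φ, X)`. -/
def pres (T : X → X) (φ : X → ℝ) : ℝ :=
  presRel T φ Set.univ

/-- `g` maps `A` homeomorphically onto `B`. -/
def MapsHomeomorphicallyOnto (g : X → X) (A B : Set X) : Prop :=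
  g '' A = B ∧ ∃ e : A ≃ₜ B, ∀ a : A, (e a : X) = g a

/-- Condition (*): `n ≥ 1` is a Gibbs time for `x` when `f^n` maps the dynamical ball
`B_ε(x,n)` homeomorphically onto the ball `B(f^n x, ε)` for every `0 < ε < δ₀`. -/
def IsGibbsTime (f : X → X) (δ₀ : ℝ) (x : X) (n : ℕ) : Prop :=
  1 ≤ n ∧ ∀ ε : ℝ, 0 < ε → ε < δ₀ →
    MapsHomeomorphicallyOnto (f^[n]) (dynBall f x n ε) (Metric.ball (f^[n] x) ε)

/-- The set `G` of Hypothesis (H1): points whose frequency of Gibbs times is at least `θ`. -/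
def gibbsSet (f : X → X) (δ₀ θ : ℝ) : Set X :=
  {x | θ ≤ Filter.atTop.limsup
    (fun n : ℕ => ((Set.Icc 1 n ∩ {j | IsGibbsTime f δ₀ x j}).ncard : ℝ) / n)}

/-- Every preorbit `⋃_{j≥0} f^{-j}(x)` is dense. -/
def DensePreorbits (f : X → X) : Prop :=
  ∀ x : X, Dense (⋃ n : ℕ, f^[n] ⁻¹' {x})

/-- Hypothesis (H2): Bowen property of `φ` on `G` at Gibbs times. -/
def BowenOnGibbs (f : X → X) (φ : X → ℝ) (δ₀ : ℝ) (G : Set X) : Prop :=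
  ∃ V > 0, ∃ ε > 0, ∀ x ∈ G, ∀ n : ℕ, IsGibbsTime f δ₀ x n →
    ∀ y ∈ dynBall f x n ε, ∀ z ∈ dynBall f x n ε,
      |∑ i ∈ Finset.range (n + 1), (φ (f^[i] y) - φ (f^[i] z))| ≤ V

/-- Bowen property of `φ` on a set `S` at all times (Hypothesis (H4)). -/
def BowenOn (T : X → X) (φ : X → ℝ) (S : Set X) : Prop :=
  ∃ ε > 0, ∃ V > 0, ∀ x ∈ S, ∀ n : ℕ,
    ∀ y ∈ dynBall T x n ε, ∀ z ∈ dynBall T x n ε,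
      |∑ j ∈ Finset.range (n + 1), (φ (T^[j] y) - φ (T^[j] z))| ≤ V

/-- Hypotheses (H3)/(H5): the topological pressure is located on `S`:
`P_T(φ, Sᶜ) < P_T(φ, S) = P_T(φ)`. -/
def PressureLocatedOn (T : X → X) (φ : X → ℝ) (S : Set X) : Prop :=
  presRel T φ Sᶜ < presRel T φ S ∧ presRel T φ S = pres T φ

end Dyn

section Meas

variable [MetricSpace X] [MeasurableSpace X]

/-- `μ` is a weak Gibbs measure for `(T,φ)` with constant `P`. -/
def IsWeakGibbs (T : X → X) (φ : X → ℝ) (μ : Measure X) (P : ℝ) : Prop :=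
  ∃ δ > 0, ∀ ε : ℝ, 0 < ε → ε ≤ δ → ∃ K > 0,
    ∀ᵐ x ∂μ, ∃ nk : ℕ → ℕ, StrictMono nk ∧
      ∀ k : ℕ, ∀ y ∈ dynBall T x (nk k) ε,
        ENNReal.ofReal (K⁻¹ * Real.exp (birkhoff T φ (nk k) y - (nk k : ℝ) * P))
            ≤ μ (dynBall T x (nk k) ε) ∧
          μ (dynBall T x (nk k) ε)
            ≤ ENNReal.ofReal (K * Real.exp (birkhoff T φ (nk k) y - (nk k : ℝ) * P))

/-- The Ruelle–Perron–Frobenius transfer operator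
`L_{f,φ} ψ (x) = ∑_{y ∈ f⁻¹(x)} e^{φ(y)} ψ(y)`. -/
def transferOp (f : X → X) (φ ψ : X → ℝ) (x : X) : ℝ :=
  ∑' y : (f ⁻¹' {x} : Set X), Real.exp (φ y) * ψ y

/-- A reference measure for `(f,φ)`: a Borel probability measure `ν` with
`L*_{f,φ} ν = λ ν`. -/
def IsReferenceMeasure (f : X → X) (φ : X → ℝ) (ν : Measure X) (lam : ℝ) : Prop :=
  IsProbabilityMeasure ν ∧ 0 < lam ∧
    ∀ ψ : X → ℝ, Continuous ψ →
      ∫ x, transferOp f φ ψ x ∂ν = lam * ∫ x, ψ x ∂ν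

end Meas

section Entropy

variable [MeasurableSpace X]

/-- Entropy of the finite partition of `X` by the fibers of `P`. -/
def partEntropy (μ : Measure X) {α : Type} [Fintype α] (P : X → α) : ℝ :=
  ∑ a : α, Real.negMulLog ((μ (P ⁻¹' {a})).toReal)

/-- Kolmogorov–Sinai entropy of `μ` with respect to the partition given by `P`. -/
def entropyWrt (T : X → X) (μ : Measure X) {k : ℕ} (P : X → Fin k) : ℝ :=
  Filter.atTop.liminf fun n : ℕ =>
    partEntropy μ (fun x => fun j : Fin n => P (T^[(j : ℕ)] x)) / n

/-- Kolmogorov–Sinai (metric) entropy of `μ`: supremum over finite measurable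
partitions of the entropy of `T` with respect to the partition. -/
def metricEntropy (T : X → X) (μ : Measure X) : ℝ :=
  ⨆ p : Σ k : ℕ, {P : X → Fin k // Measurable P}, entropyWrt T μ p.2.1

end Entropy

section Equi

variable [MetricSpace X] [MeasurableSpace X]

/-- `μ` is an equilibrium state for `(T,φ)`: it is `T`-invariant and attains the
supremum of `η ↦ h_η(T) + ∫ φ dη` over all `T`-invariant Borel probability measures. -/
def IsEquilibriumState (T : X → X) (φ : X → ℝ) (μ : Measure X) : Prop :=
  IsProbabilityMeasure μ ∧ Measure.map T μ = μ ∧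
    ∀ η : Measure X, IsProbabilityMeasure η → Measure.map T η = η →
      metricEntropy T η + ∫ x, φ x ∂η ≤ metricEntropy T μ + ∫ x, φ x ∂μ

/-- A generating partition for `G`: a countable measurable partition of `G` with finite
entropy whose iterates under `f` generate the Borel σ-algebra of `G` (in the sense that
every measurable set agrees on `G` with a set in the σ-algebra generated by the cylinders). -/
structure GeneratingPartition (f : X → X) (G : Set X) : Type _ where
  part : ℕ → Set X
  measurable : ∀ i, MeasurableSet (part i)
  disj : Pairwise (Function.onFun Disjoint part)
  cover : G = ⋃ i, part i
  finiteEntropy : ∀ μ : Measure X, IsProbabilityMeasure μ →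
    Summable fun i => Real.negMulLog ((μ (part i)).toReal)
  generates : ∀ B : Set X, MeasurableSet B →
    ∃ B' : Set X,
      MeasurableSet[MeasurableSpace.generateFrom
        {s : Set X | ∃ (n : ℕ) (a : Fin n → ℕ), s = ⋂ j : Fin n, f^[(j : ℕ)] ⁻¹' part (a j)}] B' ∧
      B ∩ G = B' ∩ G

end Equi

end PaperWG

namespace PaperWG

open ProbabilityTheory

/-- Lemma: two ergodic invariant measures of a fiber-contracting skew system with the
same ergodic projection coincide. -/
theorem ergodic_lift_unique
    {N : Type*} [MetricSpace N] [CompactSpace N] [MeasurableSpace N] [BorelSpace N]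
    {M : Type*} [MetricSpace M] [CompactSpace M] [MeasurableSpace M] [BorelSpace M]
    (F : N → N) (f : M → M) (hF : Continuous F) (hf : Continuous f)
    (π : N → M) (hπc : Continuous π) (hπs : Function.Surjective π)
    (hsemi : ∀ z : N, π (F z) = f (π z))
    (lam : ℝ) (hlam0 : 0 < lam) (hlam1 : lam < 1)
    (hcontr : ∀ yh zh : N, π yh = π zh → dist (F yh) (F zh) ≤ lam * dist yh zh)
    (μ₁ μ₂ : Measure N)
    (hp1 : IsProbabilityMeasure μ₁) (hp2 : IsProbabilityMeasure μ₂)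
    (he1 : Ergodic F μ₁) (he2 : Ergodic F μ₂)
    (hproj : Measure.map π μ₁ = Measure.map π μ₂)
    (hergbase : Ergodic f (Measure.map π μ₁)) :
    μ₁ = μ₂ := by
  classical
  -- N is nonempty
  haveI hNne : Nonempty N := by
    by_contra h
    rw [not_nonempty_iff] at h
    have h1 : (μ₁ Set.univ) = 1 := hp1.measure_univ
    rw [Set.univ_eq_empty_iff.mpr h] at h1
    simp at h1
  -- iterated fiber contraction
  have hiter : ∀ n : ℕ, ∀ y z : N, π y = π z →
      π (F^[n] y) = π (F^[n] z) ∧ dist (F^[n] y) (F^[n] z) ≤ lam ^ n * dist y z := by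
    intro n
    induction n with
    | zero => intro y z h; simpa using h
    | succ n ih =>
        intro y z h
        obtain ⟨h1, h2⟩ := ih y z h
        constructor
        · rw [Function.iterate_succ_apply', Function.iterate_succ_apply', hsemi, hsemi, h1]
        · rw [Function.iterate_succ_apply', Function.iterate_succ_apply']
          calc dist (F (F^[n] y)) (F (F^[n] z)) ≤ lam * dist (F^[n] y) (F^[n] z) :=
                hcontr _ _ h1
            _ ≤ lam * (lam ^ n * dist y z) := mul_le_mul_of_nonneg_left h2 hlam0.le
            _ = lam ^ (n + 1) * dist y z := by ring
  -- measurable structure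
  have hπm : Measurable π := hπc.measurable
  have hgm : Measurable fun y : N => (π y, y) := hπm.prodMk measurable_id
  set ν : Measure M := Measure.map π μ₁ with hν
  set ρ₁ : Measure (M × N) := Measure.map (fun y : N => (π y, y)) μ₁ with hρ₁
  set ρ₂ : Measure (M × N) := Measure.map (fun y : N => (π y, y)) μ₂ with hρ₂
  haveI : IsProbabilityMeasure ν := Measure.isProbabilityMeasure_map hπm.aemeasurable
  haveI : IsProbabilityMeasure ρ₁ := Measure.isProbabilityMeasure_map hgm.aemeasurable
  haveI : IsProbabilityMeasure ρ₂ := Measure.isProbabilityMeasure_map hgm.aemeasurable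
  have hfst₁ : ρ₁.fst = ν := by
    rw [hρ₁, Measure.fst, Measure.map_map measurable_fst hgm]
    rfl
  have hfst₂ : ρ₂.fst = ν := by
    rw [hρ₂, Measure.fst, Measure.map_map measurable_fst hgm]
    exact hproj.symm
  set κ₁ := ρ₁.condKernel with hκ₁
  set κ₂ := ρ₂.condKernel with hκ₂
  have hdis₁ : ν ⊗ₘ κ₁ = ρ₁ := by rw [hκ₁, ← hfst₁]; exact Measure.disintegrate ρ₁ ρ₁.condKernel
  have hdis₂ : ν ⊗ₘ κ₂ = ρ₂ := by rw [hκ₂, ← hfst₂]; exact Measure.disintegrate ρ₂ ρ₂.condKernel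
  -- the kernels are concentrated on fibers
  have hSmeas : MeasurableSet {p : M × N | ¬ π p.2 = p.1} :=
    (isClosed_eq (hπc.comp continuous_snd) continuous_fst).measurableSet.compl
  have hconc : ∀ (μ : Measure N) (ρ : Measure (M × N)) (κ : ProbabilityTheory.Kernel M N)
      [IsSFiniteKernel κ],
      Measure.map (fun y : N => (π y, y)) μ = ρ → ν ⊗ₘ κ = ρ →
      ∀ᵐ x ∂ν, ∀ᵐ y ∂(κ x), π y = x := by
    intro μ ρ κ _ hmap hdis
    have hz : ρ {p : M × N | ¬ π p.2 = p.1} = 0 := by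
      rw [← hmap, Measure.map_apply hgm hSmeas]
      have hpre : (fun y : N => (π y, y)) ⁻¹' {p : M × N | ¬ π p.2 = p.1} = ∅ := by
        ext y; simp
      rw [hpre]; simp
    rw [← hdis, Measure.compProd_apply hSmeas] at hz
    have hmeas : Measurable fun x => (κ x) (Prod.mk x ⁻¹' {p : M × N | ¬ π p.2 = p.1}) :=
      ProbabilityTheory.Kernel.measurable_kernel_prodMk_left hSmeas
    have hae := (lintegral_eq_zero_iff hmeas).mp hz
    filter_upwards [hae] with x hx
    rw [ae_iff]
    simpa using hx
  have hconc₁ : ∀ᵐ x ∂ν, ∀ᵐ y ∂(κ₁ x), π y = x := hconc μ₁ ρ₁ κ₁ rfl hdis₁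
  have hconc₂ : ∀ᵐ x ∂ν, ∀ᵐ y ∂(κ₂ x), π y = x := hconc μ₂ ρ₂ κ₂ rfl hdis₂
  -- main claim: equal integrals of bounded continuous functions
  have key : ∀ φ : BoundedContinuousFunction N ℝ, ∫ y, φ y ∂μ₁ = ∫ y, φ y ∂μ₂ := by
    intro φ
    have hint : ∀ ε : ℝ, 0 < ε → |∫ y, φ y ∂μ₁ - ∫ y, φ y ∂μ₂| ≤ ε := by
      intro ε hε
      -- uniform continuity
      have hφu : UniformContinuous (φ : N → ℝ) :=
        CompactSpace.uniformContinuous_of_continuous φ.continuous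
      obtain ⟨δ, hδ, hδε⟩ := Metric.uniformContinuous_iff.mp hφu (ε / 4) (by linarith)
      -- choose n with lam ^ n * diam < δ
      set D := Metric.diam (Set.univ : Set N) with hD
      have htend : Tendsto (fun n : ℕ => lam ^ n * D) atTop (𝓝 0) := by
        simpa using (tendsto_pow_atTop_nhds_zero_of_lt_one hlam0.le hlam1).mul_const D
      obtain ⟨n, hn⟩ := (htend.eventually (gt_mem_nhds hδ)).exists
      -- fiber estimate for g = φ ∘ F^[n]
      set g : N → ℝ := fun y => φ (F^[n] y) with hg
      have hgc : Continuous g := φ.continuous.comp (hF.iterate n)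
      have hgb : ∀ y : N, ‖g y‖ ≤ ‖φ‖ := fun y => φ.norm_coe_le_norm _
      have hfibest : ∀ y z : N, π y = π z → |g y - g z| ≤ ε / 4 := by
        intro y z h
        have h1 := (hiter n y z h).2
        have h2 : dist y z ≤ D :=
          Metric.dist_le_diam_of_mem isCompact_univ.isBounded (Set.mem_univ y) (Set.mem_univ z)
        have h3 : dist (F^[n] y) (F^[n] z) < δ :=
          lt_of_le_of_lt (h1.trans (mul_le_mul_of_nonneg_left h2 (pow_nonneg hlam0.le n))) hn
        have h4 := hδε h3
        rw [Real.dist_eq] at h4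
        exact h4.le
      -- invariance: ∫ φ dμ = ∫ g dμ
      have hinv : ∀ (μ : Measure N), Ergodic F μ → ∫ y, φ y ∂μ = ∫ y, g y ∂μ := by
        intro μ he
        have hmp : MeasurePreserving F^[n] μ μ := he.toMeasurePreserving.iterate n
        conv_lhs => rw [← hmp.map_eq]
        rw [integral_map (hF.iterate n).measurable.aemeasurable
          φ.continuous.aestronglyMeasurable]
      -- pass to the fibered picture
      have hstep : ∀ (μ : Measure N) (ρ : Measure (M × N)) (κ : ProbabilityTheory.Kernel M N)
          [IsMarkovKernel κ] [IsProbabilityMeasure ρ],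
          Measure.map (fun y : N => (π y, y)) μ = ρ → ν ⊗ₘ κ = ρ →
          ∫ y, g y ∂μ = ∫ x, ∫ y, g y ∂(κ x) ∂ν := by
        intro μ ρ κ _ _ hmap hdis
        have hsnd : Continuous fun p : M × N => g p.2 := hgc.comp continuous_snd
        have h1 : ∫ y, g y ∂μ = ∫ p : M × N, g p.2 ∂ρ := by
          rw [← hmap, integral_map hgm.aemeasurable hsnd.aestronglyMeasurable]
        have hi : Integrable (fun p : M × N => g p.2) (ν.compProd κ) := by
          rw [hdis]
          refine ⟨hsnd.aestronglyMeasurable, ?_⟩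
          exact HasFiniteIntegral.of_bounded (C := ‖φ‖)
            (Filter.Eventually.of_forall fun p => hgb p.2)
        rw [h1, ← hdis, Measure.integral_compProd hi]
      -- the inner integrals, their measurability and integrability
      have hAmeas : ∀ (κ : ProbabilityTheory.Kernel M N) [IsMarkovKernel κ],
          StronglyMeasurable fun x => ∫ y, g y ∂(κ x) := by
        intro κ _
        have hsm : StronglyMeasurable fun p : M × N => g p.2 :=
          hgc.stronglyMeasurable.comp_measurable measurable_snd
        exact hsm.integral_kernel_prod_right'
      have hAint : ∀ (κ : ProbabilityTheory.Kernel M N) [IsMarkovKernel κ],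
          Integrable (fun x => ∫ y, g y ∂(κ x)) ν := by
        intro κ _
        refine ⟨(hAmeas κ).aestronglyMeasurable, ?_⟩
        apply HasFiniteIntegral.of_bounded (C := ‖φ‖)
        filter_upwards with x
        calc ‖∫ y, g y ∂(κ x)‖ ≤ ‖φ‖ * ((κ x) Set.univ).toReal :=
              norm_integral_le_of_norm_le_const (Filter.Eventually.of_forall hgb)
          _ = ‖φ‖ := by simp
      have hgint : ∀ (m : Measure N) [IsProbabilityMeasure m], Integrable g m := by
        intro m _
        exact ⟨hgc.aestronglyMeasurable,
          HasFiniteIntegral.of_bounded (C := ‖φ‖) (Filter.Eventually.of_forall hgb)⟩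
      -- the two inner integrals are a.e. close
      have hclose : ∀ᵐ x ∂ν,
          |(∫ y, g y ∂(κ₁ x)) - ∫ y, g y ∂(κ₂ x)| ≤ ε / 2 := by
        filter_upwards [hconc₁, hconc₂] with x h₁ h₂
        obtain ⟨y₀, hy₀⟩ := hπs x
        have hb : ∀ (κ : ProbabilityTheory.Kernel M N) [IsMarkovKernel κ],
            (∀ᵐ y ∂(κ x), π y = x) → |(∫ y, g y ∂(κ x)) - g y₀| ≤ ε / 4 := by
          intro κ _ hae
          have heq : (∫ y, g y ∂(κ x)) - g y₀ = ∫ y, (g y - g y₀) ∂(κ x) := by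
            rw [integral_sub (hgint (κ x)) (integrable_const _), integral_const]
            simp
          rw [heq]
          have hb2 : ‖∫ y, (g y - g y₀) ∂(κ x)‖ ≤ (ε / 4) * ((κ x) Set.univ).toReal := by
            apply norm_integral_le_of_norm_le_const
            filter_upwards [hae] with y hy
            rw [Real.norm_eq_abs]
            exact hfibest y y₀ (by rw [hy, hy₀])
          simpa using hb2
        have hb₁ := hb κ₁ h₁
        have hb₂ := hb κ₂ h₂
        have hrw : (∫ y, g y ∂(κ₁ x)) - ∫ y, g y ∂(κ₂ x)
            = ((∫ y, g y ∂(κ₁ x)) - g y₀) - ((∫ y, g y ∂(κ₂ x)) - g y₀) := by ring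
        rw [hrw]
        calc |((∫ y, g y ∂(κ₁ x)) - g y₀) - ((∫ y, g y ∂(κ₂ x)) - g y₀)|
            ≤ |(∫ y, g y ∂(κ₁ x)) - g y₀| + |(∫ y, g y ∂(κ₂ x)) - g y₀| := abs_sub _ _
          _ ≤ ε / 4 + ε / 4 := add_le_add hb₁ hb₂
          _ = ε / 2 := by ring
      -- put everything together
      rw [hinv μ₁ he1, hinv μ₂ he2, hstep μ₁ ρ₁ κ₁ rfl hdis₁, hstep μ₂ ρ₂ κ₂ rfl hdis₂]
      rw [← integral_sub (hAint κ₁) (hAint κ₂)]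
      calc |∫ x, ((∫ y, g y ∂(κ₁ x)) - ∫ y, g y ∂(κ₂ x)) ∂ν|
          ≤ (ε / 2) * (ν Set.univ).toReal := by
            rw [← Real.norm_eq_abs]
            apply norm_integral_le_of_norm_le_const
            filter_upwards [hclose] with x hx
            rw [Real.norm_eq_abs]; exact hx
        _ = ε / 2 := by simp
        _ ≤ ε := by linarith
    have h0 : |∫ y, φ y ∂μ₁ - ∫ y, φ y ∂μ₂| ≤ 0 := by
      by_contra h
      push_neg at h
      have := hint (|∫ y, φ y ∂μ₁ - ∫ y, φ y ∂μ₂| / 2) (by linarith)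
      linarith
    have h1 := abs_nonneg (∫ y, φ y ∂μ₁ - ∫ y, φ y ∂μ₂)
    have h2 : |∫ y, φ y ∂μ₁ - ∫ y, φ y ∂μ₂| = 0 := le_antisymm h0 h1
    have h3 := abs_eq_zero.mp h2
    linarith
  -- conclude by extensionality via bounded continuous functions
  apply ext_of_forall_lintegral_eq_of_IsFiniteMeasure
  intro f
  have hcont : Continuous fun y : N => ((f y : ℝ≥0) : ℝ) :=
    NNReal.continuous_coe.comp f.continuous
  set φr : BoundedContinuousFunction N ℝ :=
    BoundedContinuousFunction.mkOfCompact ⟨fun y => ((f y : ℝ≥0) : ℝ), hcont⟩ with hφr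
  have hbd : ∀ y : N, ‖((f y : ℝ≥0) : ℝ)‖ ≤ ‖φr‖ := fun y => φr.norm_coe_le_norm y
  have hfint1 : Integrable (fun y => ((f y : ℝ≥0) : ℝ)) μ₁ :=
    ⟨hcont.aestronglyMeasurable,
      HasFiniteIntegral.of_bounded (C := ‖φr‖) (Filter.Eventually.of_forall hbd)⟩
  have hfint2 : Integrable (fun y => ((f y : ℝ≥0) : ℝ)) μ₂ :=
    ⟨hcont.aestronglyMeasurable,
      HasFiniteIntegral.of_bounded (C := ‖φr‖) (Filter.Eventually.of_forall hbd)⟩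
  rw [lintegral_coe_eq_integral f hfint1, lintegral_coe_eq_integral f hfint2]
  congr 1
  exact key φr


end PaperWG
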